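/- For every integer n ≥ 2 and every subset T of {2,…,n−1} containing no two consecutive integers, we have the polynomial identity Σ_{S : T ⊆ S ⊆ {1,…,n−1}} φ_{S,n}(t) = t^{|T|} (1+t)^{n−1−2|T|} in ℤ[t]. -/

import Mathlib

open Polynomial Finset

/-- `[m]_t = 1 + t + ⋯ + t^(m-1)`, with `[0]_t = 0`. -/
noncomputable def qnum (m : ℕ) : Polynomial ℤ := ∑ i ∈ Finset.range m, X ^ i

/-- Given the previous value `prev` and a (sorted) list `s₁, …, s_ℓ`, the product
`[s₁ - prev - 1]_t · [s₂ - s₁ - 1]_t ⋯ [s_ℓ - s_{ℓ-1} - 1]_t`. -/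
noncomputable def gapProd : ℕ → List ℕ → Polynomial ℤ
  | _, [] => 1
  | prev, s :: rest => qnum (s - prev - 1) * gapProd s rest

/-- `S` contains no two consecutive integers. -/
def NoTwoConsec (S : Finset ℕ) : Prop := ∀ i ∈ S, i + 1 ∉ S

instance (S : Finset ℕ) : Decidable (NoTwoConsec S) :=
  inferInstanceAs (Decidable (∀ i ∈ S, i + 1 ∉ S))

/-- The polynomial `φ_{S,n}(t) ∈ ℤ[t]`: it is `0` unless `S` is a subset of
`[2, n-1]` with no two consecutive integers, in which case, writing
`S = {s₁ < … < s_ℓ}`, it equals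
`t^ℓ [s₁-1]_t [s₂-s₁-1]_t ⋯ [s_ℓ-s_{ℓ-1}-1]_t` if `n-1 ∈ S`, and the same times
`[n - s_ℓ]_t` if `n-1 ∉ S` (in particular `φ_{∅,n} = [n]_t`). -/
noncomputable def phi (n : ℕ) (S : Finset ℕ) : Polynomial ℤ :=
  if S ⊆ Finset.Icc 2 (n - 1) ∧ NoTwoConsec S then
    X ^ S.card * gapProd 0 (S.sort (· ≤ ·)) *
      (if n - 1 ∈ S then 1 else qnum (n - S.sup id))
  else 0

lemma qnum_zero : qnum 0 = 0 := by simp [qnum]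

lemma qnum_one : qnum 1 = 1 := by simp [qnum]

lemma qnum_succ (m : ℕ) : qnum (m + 1) = qnum m + X ^ m := by
  simp [qnum, Finset.sum_range_succ]

lemma qnum_two : qnum 2 = 1 + X := by
  rw [show (2:ℕ) = 1 + 1 from rfl, qnum_succ, qnum_one, pow_one]

/-- raw version of phi with uniform end factor -/
noncomputable def rawPhi (n : ℕ) (S : Finset ℕ) : Polynomial ℤ :=
  X ^ S.card * gapProd 0 (S.sort (· ≤ ·)) * qnum (n - S.sup id)

noncomputable def psiTerm (n : ℕ) (S : Finset ℕ) : Polynomial ℤ :=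
  X ^ S.card * gapProd 0 (S.sort (· ≤ ·)) * X ^ (n - 1 - S.sup id)

def stabSets (m : ℕ) (T : Finset ℕ) : Finset (Finset ℕ) :=
  (Finset.Icc 2 m).powerset.filter (fun S => T ⊆ S ∧ NoTwoConsec S)


lemma gapProd_append (l : List ℕ) (prev a : ℕ) :
    gapProd prev (l ++ [a]) = gapProd prev l * qnum (a - l.getLastD prev - 1) := by
  induction l generalizing prev with
  | nil => simp [gapProd]
  | cons s rest ih =>
      rw [List.cons_append, gapProd, gapProd, ih, List.getLastD_cons]
      ring

lemma sort_append_max {S : Finset ℕ} {a : ℕ} (h : ∀ x ∈ S, x < a) :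
    (insert a S).sort (· ≤ ·) = S.sort (· ≤ ·) ++ [a] := by
  have ha : a ∉ S := fun hmem => lt_irrefl a (h a hmem)
  have hperm : List.Perm ((insert a S).sort (· ≤ ·)) (S.sort (· ≤ ·) ++ [a]) := by
    refine (Finset.sort_perm_toList (insert a S) (· ≤ ·)).trans ?_
    refine (Finset.toList_insert ha).trans ?_
    refine (List.Perm.cons a (Finset.sort_perm_toList S (· ≤ ·)).symm).trans ?_
    exact (List.perm_append_singleton _ _).symm
  refine List.Perm.eq_of_pairwise' (Finset.pairwise_sort _ _) ?_ hperm
  rw [List.pairwise_append]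
  refine ⟨Finset.pairwise_sort _ _, List.pairwise_singleton _ _, ?_⟩
  intro x hx y hy
  rw [List.mem_singleton] at hy
  subst hy
  exact le_of_lt (h x ((Finset.mem_sort _).mp hx))

lemma getLastD_sort (S : Finset ℕ) : (S.sort (· ≤ ·)).getLastD 0 = S.sup id := by
  rcases eq_empty_or_nonempty S with rfl | hS
  · simp
  · obtain ⟨a, haS, hmax⟩ := S.exists_max_image id hS
    have hins : S = insert a (S.erase a) := (Finset.insert_erase haS).symm
    have hlt : ∀ x ∈ S.erase a, x < a := by
      intro x hx
      rcases Finset.mem_erase.mp hx with ⟨hne, hxS⟩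
      exact lt_of_le_of_ne (hmax x hxS) hne
    conv_lhs => rw [hins, sort_append_max hlt]
    rw [List.getLastD_concat]
    have h2 : (S.erase a).sup id ≤ a := Finset.sup_le fun x hx => le_of_lt (hlt x hx)
    conv_rhs => rw [hins]
    rw [Finset.sup_insert]
    simp only [id]
    omega

lemma sup_le_of_subset_Icc {S : Finset ℕ} {m : ℕ} (h : S ⊆ Finset.Icc 2 m) :
    S.sup id ≤ m := by
  refine Finset.sup_le fun x hx => ?_
  exact (Finset.mem_Icc.mp (h hx)).2

lemma noTwoConsec_subset {A B : Finset ℕ} (hAB : A ⊆ B) (hB : NoTwoConsec B) :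
    NoTwoConsec A := fun i hi hc => hB i (hAB hi) (hAB hc)

/-- inserting a top element -/
lemma rawPhi_insert_top {n : ℕ} {S : Finset ℕ} (hn : 2 ≤ n)
    (h : ∀ x ∈ S, x < n - 1) :
    rawPhi n (insert (n - 1) S) = X * rawPhi (n - 2) S := by
  have ha : (n - 1) ∉ S := fun hmem => lt_irrefl _ (h _ hmem)
  have hsup : (insert (n - 1) S).sup id = n - 1 := by
    rw [Finset.sup_insert]
    have : S.sup id ≤ n - 1 := Finset.sup_le fun x hx => le_of_lt (h x hx)
    simp only [id]
    omega
  rw [rawPhi, rawPhi, Finset.card_insert_of_notMem ha, sort_append_max h,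
    gapProd_append, getLastD_sort, hsup]
  have e1 : n - (n - 1) = 1 := by omega
  have e2 : n - 1 - S.sup id - 1 = n - 2 - S.sup id := by omega
  rw [e1, e2, qnum_one, pow_succ]
  ring

lemma psiTerm_insert_top {n : ℕ} {S : Finset ℕ} (hn : 3 ≤ n)
    (h : ∀ x ∈ S, x < n - 2) :
    psiTerm n (insert (n - 2) S) = X ^ 2 * rawPhi (n - 3) S := by
  have ha : (n - 2) ∉ S := fun hmem => lt_irrefl _ (h _ hmem)
  have hsup : (insert (n - 2) S).sup id = n - 2 := by
    rw [Finset.sup_insert]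
    have : S.sup id ≤ n - 2 := Finset.sup_le fun x hx => le_of_lt (h x hx)
    simp only [id]
    omega
  rw [psiTerm, rawPhi, Finset.card_insert_of_notMem ha, sort_append_max h,
    gapProd_append, getLastD_sort, hsup]
  have e1 : n - 1 - (n - 2) = 1 := by omega
  have e2 : n - 2 - S.sup id - 1 = n - 3 - S.sup id := by omega
  rw [e1, e2, pow_succ, pow_one]
  ring

lemma rawPhi_step {n : ℕ} {S : Finset ℕ} (hn : 2 ≤ n) (hsup : S.sup id ≤ n - 2) :
    rawPhi n S = rawPhi (n - 1) S + psiTerm n S := by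
  rw [rawPhi, rawPhi, psiTerm]
  have e1 : n - S.sup id = (n - 1 - S.sup id) + 1 := by omega
  rw [e1, qnum_succ]
  ring

lemma psiTerm_step {n : ℕ} {S : Finset ℕ} (hn : 3 ≤ n) (hsup : S.sup id ≤ n - 3) :
    psiTerm n S = X * psiTerm (n - 1) S := by
  rw [psiTerm, psiTerm]
  have e1 : n - 1 - S.sup id = (n - 1 - 1 - S.sup id) + 1 := by omega
  rw [e1, pow_succ]
  ring

lemma stabSets_empty_of_not_subset {m : ℕ} {T : Finset ℕ} (h : ¬ T ⊆ Finset.Icc 2 m) :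
    stabSets m T = ∅ := by
  rw [Finset.eq_empty_iff_forall_notMem]
  intro S hS
  rw [stabSets, Finset.mem_filter, Finset.mem_powerset] at hS
  exact h (hS.2.1.trans hS.1)

lemma stabSets_sum_split {m : ℕ} (hm : 2 ≤ m) (T : Finset ℕ) (f : Finset ℕ → Polynomial ℤ) :
    ∑ S ∈ stabSets m T, f S =
      (∑ S ∈ stabSets (m - 1) T, f S) +
        ∑ S ∈ stabSets (m - 2) (T.erase m), f (insert m S) := by
  rw [← Finset.sum_filter_add_sum_filter_not (stabSets m T) (fun S => m ∈ S)]
  rw [add_comm]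
  congr 1
  · -- sets not containing m
    apply Finset.sum_congr _ (fun _ _ => rfl)
    ext S
    simp only [stabSets, Finset.mem_filter, Finset.mem_powerset, Finset.subset_iff,
      Finset.mem_Icc]
    constructor
    · rintro ⟨⟨h1, h2, h3⟩, h4⟩
      refine ⟨fun x hx => ?_, h2, h3⟩
      have := h1 hx
      have : x ≠ m := fun e => h4 (e ▸ hx)
      omega
    · rintro ⟨h1, h2, h3⟩
      have hm' : m ∉ S := fun hx => by have := h1 hx; omega
      exact ⟨⟨fun x hx => by have := h1 hx; omega, h2, h3⟩, hm'⟩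
  · -- sets containing m
    refine Finset.sum_nbij' (fun S => S.erase m) (fun S => insert m S) ?_ ?_ ?_ ?_ ?_
    · intro S hS
      simp only [stabSets, Finset.mem_filter, Finset.mem_powerset] at hS ⊢
      obtain ⟨⟨hsub, hT, hst⟩, hmem⟩ := hS
      have hm1 : m - 1 ∉ S := by
        intro hx
        have h1 := hst (m - 1) hx
        have e : m - 1 + 1 = m := by omega
        rw [e] at h1
        exact h1 hmem
      refine ⟨?_, Finset.erase_subset_erase m hT, noTwoConsec_subset (Finset.erase_subset m S) hst⟩
      intro x hx
      rcases Finset.mem_erase.mp hx with ⟨hne, hxS⟩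
      have h1 := Finset.mem_Icc.mp (hsub hxS)
      have hne2 : x ≠ m - 1 := fun e => hm1 (e ▸ hxS)
      rw [Finset.mem_Icc]
      omega
    · intro S hS
      simp only [stabSets, Finset.mem_filter, Finset.mem_powerset] at hS ⊢
      obtain ⟨hsub, hT, hst⟩ := hS
      have hmS : m ∉ S := by
        intro hx
        have := Finset.mem_Icc.mp (hsub hx)
        omega
      have hbig : ∀ x ∈ S, x + 2 ≤ m := by
        intro x hx
        have := Finset.mem_Icc.mp (hsub hx)
        omega
      refine ⟨⟨?_, ?_, ?_⟩, Finset.mem_insert_self m S⟩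
      · intro x hx
        rcases Finset.mem_insert.mp hx with rfl | hxS
        · rw [Finset.mem_Icc]; omega
        · have := Finset.mem_Icc.mp (hsub hxS)
          rw [Finset.mem_Icc]; omega
      · intro x hx
        rcases eq_or_ne x m with he | hne
        · exact he ▸ Finset.mem_insert_self m S
        · exact Finset.mem_insert_of_mem (hT (Finset.mem_erase.mpr ⟨hne, hx⟩))
      · intro i hi hc
        rcases Finset.mem_insert.mp hi with rfl | hiS
        · rcases Finset.mem_insert.mp hc with he | hcS
          · omega
          · have := hbig _ hcS; omega
        · rcases Finset.mem_insert.mp hc with he | hcS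
          · have := hbig _ hiS; omega
          · exact hst i hiS hcS
    · intro S hS
      simp only [stabSets, Finset.mem_filter] at hS
      exact Finset.insert_erase hS.2
    · intro S hS
      simp only [stabSets, Finset.mem_filter, Finset.mem_powerset] at hS
      apply Finset.erase_insert
      intro hx
      have := Finset.mem_Icc.mp (hS.1 hx)
      omega
    · intro S hS
      simp only [stabSets, Finset.mem_filter] at hS
      rw [Finset.insert_erase hS.2]

lemma two_mul_card_le {m : ℕ} {T : Finset ℕ} (hsub : T ⊆ Finset.Icc 2 m)
    (hst : NoTwoConsec T) : 2 * T.card ≤ m := by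
  induction m using Nat.strong_induction_on generalizing T with
  | _ m ih =>
    rcases Nat.lt_or_ge m 2 with hm | hm
    · have : T = ∅ := by
        rw [Finset.eq_empty_iff_forall_notMem]
        intro x hx
        have := Finset.mem_Icc.mp (hsub hx)
        omega
      subst this
      simp
    · by_cases hmT : m ∈ T
      · have hm1 : m - 1 ∉ T := by
          intro hx
          have h1 := hst (m - 1) hx
          have : m - 1 + 1 = m := by omega
          rw [this] at h1
          exact h1 hmT
        have hsub' : T.erase m ⊆ Finset.Icc 2 (m - 2) := by
          intro x hx
          rcases Finset.mem_erase.mp hx with ⟨hne, hxT⟩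
          have := Finset.mem_Icc.mp (hsub hxT)
          have : x ≠ m - 1 := fun e => hm1 (e ▸ hxT)
          rw [Finset.mem_Icc]
          have := Finset.mem_Icc.mp (hsub hxT)
          omega
        have hih := ih (m - 2) (by omega) hsub' (noTwoConsec_subset (Finset.erase_subset m T) hst)
        rw [Finset.card_erase_of_mem hmT] at hih
        have hc : 1 ≤ T.card := Finset.card_pos.mpr ⟨m, hmT⟩
        omega
      · have hsub' : T ⊆ Finset.Icc 2 (m - 1) := by
          intro x hx
          have := Finset.mem_Icc.mp (hsub hx)
          have : x ≠ m := fun e => hmT (e ▸ hx)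
          rw [Finset.mem_Icc]
          omega
        have := ih (m - 1) (by omega) hsub' hst
        omega

noncomputable def Fsum (n : ℕ) (T : Finset ℕ) : Polynomial ℤ :=
  ∑ S ∈ stabSets (n - 1) T, rawPhi n S

noncomputable def Qsum (n : ℕ) (T : Finset ℕ) : Polynomial ℤ :=
  ∑ S ∈ stabSets (n - 2) T, psiTerm n S

lemma Fsum_empty_of_not_subset {n : ℕ} {T : Finset ℕ} (h : ¬ T ⊆ Finset.Icc 2 (n - 1)) :
    Fsum n T = 0 := by
  rw [Fsum, stabSets_empty_of_not_subset h, Finset.sum_empty]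

lemma Qsum_empty_of_not_subset {n : ℕ} {T : Finset ℕ} (h : ¬ T ⊆ Finset.Icc 2 (n - 2)) :
    Qsum n T = 0 := by
  rw [Qsum, stabSets_empty_of_not_subset h, Finset.sum_empty]

lemma R1 {n : ℕ} (hn : 3 ≤ n) (T : Finset ℕ) :
    Fsum n T = Fsum (n - 1) T + Qsum n T + X * Fsum (n - 2) (T.erase (n - 1)) := by
  rw [Fsum, stabSets_sum_split (by omega : 2 ≤ n - 1)]
  have e1 : n - 1 - 1 = n - 2 := by omega
  have e2 : n - 1 - 2 = n - 3 := by omega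
  rw [e1, e2]
  have h1 : ∑ S ∈ stabSets (n - 2) T, rawPhi n S =
      (∑ S ∈ stabSets (n - 2) T, rawPhi (n - 1) S) + ∑ S ∈ stabSets (n - 2) T, psiTerm n S := by
    rw [← Finset.sum_add_distrib]
    refine Finset.sum_congr rfl fun S hS => ?_
    rw [stabSets, Finset.mem_filter, Finset.mem_powerset] at hS
    exact rawPhi_step (by omega) (sup_le_of_subset_Icc hS.1)
  have h2 : ∑ S ∈ stabSets (n - 3) (T.erase (n - 1)), rawPhi n (insert (n - 1) S) =
      X * ∑ S ∈ stabSets (n - 3) (T.erase (n - 1)), rawPhi (n - 2) S := by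
    rw [Finset.mul_sum]
    refine Finset.sum_congr rfl fun S hS => ?_
    rw [stabSets, Finset.mem_filter, Finset.mem_powerset] at hS
    refine rawPhi_insert_top (by omega) fun x hx => ?_
    have := Finset.mem_Icc.mp (hS.1 hx)
    omega
  have e3 : n - 2 - 1 = n - 3 := by omega
  rw [h1, h2, Fsum, Fsum, Qsum, e1, e3]

lemma R2 {n : ℕ} (hn : 4 ≤ n) (T : Finset ℕ) :
    Qsum n T = X * Qsum (n - 1) T + X ^ 2 * Fsum (n - 3) (T.erase (n - 2)) := by
  rw [Qsum, stabSets_sum_split (by omega : 2 ≤ n - 2)]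
  have e1 : n - 2 - 1 = n - 3 := by omega
  have e2 : n - 2 - 2 = n - 4 := by omega
  rw [e1, e2]
  have h1 : ∑ S ∈ stabSets (n - 3) T, psiTerm n S =
      X * ∑ S ∈ stabSets (n - 3) T, psiTerm (n - 1) S := by
    rw [Finset.mul_sum]
    refine Finset.sum_congr rfl fun S hS => ?_
    rw [stabSets, Finset.mem_filter, Finset.mem_powerset] at hS
    exact psiTerm_step (by omega) (sup_le_of_subset_Icc hS.1)
  have h2 : ∑ S ∈ stabSets (n - 4) (T.erase (n - 2)), psiTerm n (insert (n - 2) S) =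
      X ^ 2 * ∑ S ∈ stabSets (n - 4) (T.erase (n - 2)), rawPhi (n - 3) S := by
    rw [Finset.mul_sum]
    refine Finset.sum_congr rfl fun S hS => ?_
    rw [stabSets, Finset.mem_filter, Finset.mem_powerset] at hS
    refine psiTerm_insert_top (by omega) fun x hx => ?_
    have := Finset.mem_Icc.mp (hS.1 hx)
    omega
  have e3 : n - 1 - 2 = n - 3 := by omega
  have e4 : n - 3 - 1 = n - 4 := by omega
  rw [h1, h2, Qsum, Fsum, e3, e4]

lemma stab0 : stabSets 0 (∅ : Finset ℕ) = {∅} := by decide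
lemma stab1 : stabSets 1 (∅ : Finset ℕ) = {∅} := by decide
lemma stab2e : stabSets 2 (∅ : Finset ℕ) = {∅, {2}} := by decide
lemma stab2s : stabSets 2 ({2} : Finset ℕ) = {{2}} := by decide

lemma rawPhi_empty (n : ℕ) : rawPhi n ∅ = qnum n := by
  simp [rawPhi, gapProd]

lemma psiTerm_empty (n : ℕ) : psiTerm n ∅ = X ^ (n - 1) := by
  simp [psiTerm, gapProd]

lemma rawPhi_three : rawPhi 3 ({2} : Finset ℕ) = X := by
  rw [rawPhi, Finset.sort_singleton]
  simp [gapProd, qnum_one]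

lemma Fsum_one : Fsum 1 (∅ : Finset ℕ) = 1 := by
  rw [Fsum, show (1:ℕ) - 1 = 0 from rfl, stab0, Finset.sum_singleton, rawPhi_empty, qnum_one]

lemma Fsum_two : Fsum 2 (∅ : Finset ℕ) = 1 + X := by
  rw [Fsum, show (2:ℕ) - 1 = 1 from rfl, stab1, Finset.sum_singleton, rawPhi_empty, qnum_two]

lemma Fsum_three_empty : Fsum 3 (∅ : Finset ℕ) = (1 + X) ^ 2 := by
  rw [Fsum, show (3:ℕ) - 1 = 2 from rfl, stab2e, Finset.sum_insert (by decide),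
    Finset.sum_singleton, rawPhi_empty, rawPhi_three,
    show (3:ℕ) = 2 + 1 from rfl, qnum_succ, qnum_two]
  ring

lemma Fsum_three_two : Fsum 3 ({2} : Finset ℕ) = X := by
  rw [Fsum, show (3:ℕ) - 1 = 2 from rfl, stab2s, Finset.sum_singleton, rawPhi_three]

lemma Qsum_three : Qsum 3 (∅ : Finset ℕ) = X ^ 2 := by
  rw [Qsum, show (3:ℕ) - 2 = 1 from rfl, stab1, Finset.sum_singleton, psiTerm_empty]

def Qstmt (n : ℕ) : Prop := ∀ T : Finset ℕ, T ⊆ Finset.Icc 2 (n-2) → NoTwoConsec T → 3 ≤ n →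
  Qsum n T = if n - 2 ∈ T then X^(T.card+1) * (1+X)^(n-2-2*T.card)
             else X^(T.card+2) * (1+X)^(n-3-2*T.card)

def Fstmt (n : ℕ) : Prop := ∀ T : Finset ℕ, T ⊆ Finset.Icc 2 (n-1) → NoTwoConsec T → 1 ≤ n →
  Fsum n T = X^T.card * (1+X)^(n-1-2*T.card)

theorem mainFQ (n : ℕ) : Qstmt n ∧ Fstmt n := by
  induction n using Nat.strong_induction_on with
  | _ n ih =>
    have hQ : Qstmt n := by
      intro T hsub hst h3
      rcases Nat.lt_or_ge n 4 with h4 | h4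
      · have hn3 : n = 3 := by omega
        subst hn3
        have hTe : T = ∅ := Finset.subset_empty.mp
          (by rwa [show Finset.Icc 2 (3-2) = ∅ from rfl] at hsub)
        subst hTe
        rw [Qsum_three, if_neg (by simp)]
        simp
      · rw [R2 h4 T]
        by_cases hmem : n - 2 ∈ T
        · have hQ0 : Qsum (n-1) T = 0 := by
            apply Qsum_empty_of_not_subset
            intro hsub'
            have := Finset.mem_Icc.mp (hsub' hmem)
            omega
          have hcpos : 1 ≤ T.card := Finset.card_pos.mpr ⟨_, hmem⟩
          obtain ⟨c, hc⟩ : ∃ c, T.card = c + 1 := ⟨T.card - 1, by omega⟩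
          have hT'sub : T.erase (n-2) ⊆ Finset.Icc 2 (n-3-1) := by
            intro x hx
            rcases Finset.mem_erase.mp hx with ⟨hne, hxT⟩
            have hx2 := Finset.mem_Icc.mp (hsub hxT)
            have hne3 : x ≠ n - 3 := by
              intro he
              have h5 := hst x hxT
              rw [he, show n - 3 + 1 = n - 2 by omega] at h5
              exact h5 hmem
            rw [Finset.mem_Icc]
            omega
          have hT'st : NoTwoConsec (T.erase (n-2)) :=
            noTwoConsec_subset (Finset.erase_subset _ _) hst
          have hF := (ih (n-3) (by omega)).2 (T.erase (n-2)) hT'sub hT'st (by omega)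
          rw [hQ0, hF, Finset.card_erase_of_mem hmem, hc]
          have h2c : 2 * (c + 1 - 1) ≤ n - 3 - 1 := by
            have := two_mul_card_le hT'sub hT'st
            rwa [Finset.card_erase_of_mem hmem, hc] at this
          rw [if_pos hmem]
          have e1 : c + 1 - 1 = c := by omega
          have e2 : n - 3 - 1 - 2 * c = n - 2 - 2 * (c+1) := by omega
          rw [e1, e2]
          ring
        · have hsub3 : T ⊆ Finset.Icc 2 (n-3) := by
            intro x hx
            have := Finset.mem_Icc.mp (hsub hx)
            have : x ≠ n - 2 := fun he => hmem (he ▸ hx)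
            rw [Finset.mem_Icc]
            omega
          have hTe : T.erase (n-2) = T := Finset.erase_eq_of_notMem hmem
          rw [hTe, if_neg hmem]
          have hQ1 := (ih (n-1) (by omega)).1 T (by
            intro x hx
            have := Finset.mem_Icc.mp (hsub3 hx)
            rw [Finset.mem_Icc]
            omega) hst (by omega)
          by_cases hm3 : n - 3 ∈ T
          · have hF0 : Fsum (n-3) T = 0 := by
              apply Fsum_empty_of_not_subset
              intro hsub'
              have := Finset.mem_Icc.mp (hsub' hm3)
              omega
            rw [if_pos (show n - 1 - 2 ∈ T by rwa [show n-1-2 = n-3 by omega])] at hQ1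
            rw [hQ1, hF0]
            have e1 : n - 1 - 2 - 2 * T.card = n - 3 - 2 * T.card := by omega
            rw [e1]
            ring
          · have hsub4 : T ⊆ Finset.Icc 2 (n-4) := by
              intro x hx
              have := Finset.mem_Icc.mp (hsub3 hx)
              have : x ≠ n - 3 := fun he => hm3 (he ▸ hx)
              rw [Finset.mem_Icc]
              omega
            rw [if_neg (show ¬ (n - 1 - 2 ∈ T) by rwa [show n-1-2 = n-3 by omega])] at hQ1
            have hF := (ih (n-3) (by omega)).2 T (by
              intro x hx
              have := Finset.mem_Icc.mp (hsub4 hx)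
              rw [Finset.mem_Icc]
              omega) hst (by omega)
            rw [hQ1, hF]
            have h2c : 2 * T.card ≤ n - 4 := two_mul_card_le hsub4 hst
            have e1 : n - 1 - 3 - 2 * T.card = n - 4 - 2 * T.card := by omega
            have e2 : n - 3 - 1 - 2 * T.card = n - 4 - 2 * T.card := by omega
            have e3 : n - 3 - 2 * T.card = (n - 4 - 2 * T.card) + 1 := by omega
            rw [e1, e2, e3, pow_succ]
            ring
    refine ⟨hQ, ?_⟩
    intro T hsub hst h1
    rcases Nat.lt_or_ge n 4 with h4 | h4
    · interval_cases n
      · have hTe : T = ∅ := Finset.subset_empty.mp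
          (by rwa [show Finset.Icc 2 (1-1) = ∅ from rfl] at hsub)
        subst hTe
        simpa using Fsum_one
      · have hTe : T = ∅ := Finset.subset_empty.mp
          (by rwa [show Finset.Icc 2 (2-1) = ∅ from rfl] at hsub)
        subst hTe
        simpa using Fsum_two
      · rw [show Finset.Icc 2 (3-1) = {2} from rfl] at hsub
        rcases Finset.subset_singleton_iff.mp hsub with hTe | hTe <;> subst hTe
        · simpa using Fsum_three_empty
        · rw [Fsum_three_two]
          simp
    · rw [R1 (by omega) T]
      by_cases hm1 : n - 1 ∈ T
      · have hF0 : Fsum (n-1) T = 0 := by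
          apply Fsum_empty_of_not_subset
          intro hsub'
          have := Finset.mem_Icc.mp (hsub' hm1)
          omega
        have hQ0 : Qsum n T = 0 := by
          apply Qsum_empty_of_not_subset
          intro hsub'
          have := Finset.mem_Icc.mp (hsub' hm1)
          omega
        have hcpos : 1 ≤ T.card := Finset.card_pos.mpr ⟨_, hm1⟩
        have hT'sub : T.erase (n-1) ⊆ Finset.Icc 2 (n-2-1) := by
          intro x hx
          rcases Finset.mem_erase.mp hx with ⟨hne, hxT⟩
          have := Finset.mem_Icc.mp (hsub hxT)
          have hne2 : x ≠ n - 2 := by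
            intro he
            have h5 := hst x hxT
            rw [he, show n - 2 + 1 = n - 1 by omega] at h5
            exact h5 hm1
          rw [Finset.mem_Icc]
          omega
        have hT'st : NoTwoConsec (T.erase (n-1)) :=
          noTwoConsec_subset (Finset.erase_subset _ _) hst
        have hF := (ih (n-2) (by omega)).2 (T.erase (n-1)) hT'sub hT'st (by omega)
        rw [hF0, hQ0, hF, Finset.card_erase_of_mem hm1]
        have h2c : 2 * (T.card - 1) ≤ n - 3 := by
          have := two_mul_card_le hT'sub hT'st
          rw [Finset.card_erase_of_mem hm1] at this
          omega
        obtain ⟨c, hc⟩ : ∃ c, T.card = c + 1 := ⟨T.card - 1, by omega⟩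
        rw [hc]
        have e1 : c + 1 - 1 = c := by omega
        have e2 : n - 2 - 1 - 2 * c = n - 1 - 2 * (c + 1) := by omega
        rw [e1, e2]
        ring
      · have hsub2 : T ⊆ Finset.Icc 2 (n-2) := by
          intro x hx
          have := Finset.mem_Icc.mp (hsub hx)
          have : x ≠ n - 1 := fun he => hm1 (he ▸ hx)
          rw [Finset.mem_Icc]
          omega
        have hTe : T.erase (n-1) = T := Finset.erase_eq_of_notMem hm1
        rw [hTe]
        have hF1 := (ih (n-1) (by omega)).2 T (by
          intro x hx
          have := Finset.mem_Icc.mp (hsub2 hx)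
          rw [Finset.mem_Icc]
          omega) hst (by omega)
        have hQn := hQ T hsub2 hst (by omega)
        by_cases hm2 : n - 2 ∈ T
        · have hF20 : Fsum (n-2) T = 0 := by
            apply Fsum_empty_of_not_subset
            intro hsub'
            have := Finset.mem_Icc.mp (hsub' hm2)
            omega
          rw [if_pos hm2] at hQn
          rw [hF1, hQn, hF20]
          have h2c : 2 * T.card ≤ n - 2 := two_mul_card_le hsub2 hst
          have e1 : n - 1 - 1 - 2 * T.card = n - 2 - 2 * T.card := by omega
          have e2 : n - 1 - 2 * T.card = (n - 2 - 2 * T.card) + 1 := by omega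
          rw [e1, e2, pow_succ]
          ring
        · have hsub3 : T ⊆ Finset.Icc 2 (n-3) := by
            intro x hx
            have := Finset.mem_Icc.mp (hsub2 hx)
            have : x ≠ n - 2 := fun he => hm2 (he ▸ hx)
            rw [Finset.mem_Icc]
            omega
          rw [if_neg hm2] at hQn
          have hF2 := (ih (n-2) (by omega)).2 T (by
            intro x hx
            have := Finset.mem_Icc.mp (hsub3 hx)
            rw [Finset.mem_Icc]
            omega) hst (by omega)
          rw [hF1, hQn, hF2]
          have h2c : 2 * T.card ≤ n - 3 := two_mul_card_le hsub3 hst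
          have e1 : n - 1 - 1 - 2 * T.card = (n - 3 - 2 * T.card) + 1 := by omega
          have e2 : n - 2 - 1 - 2 * T.card = n - 3 - 2 * T.card := by omega
          have e3 : n - 1 - 2 * T.card = (n - 3 - 2 * T.card) + 2 := by omega
          rw [e1, e2, e3]
          ring

lemma phi_eq_rawPhi {n : ℕ} (hn : 2 ≤ n) {S : Finset ℕ}
    (hsub : S ⊆ Finset.Icc 2 (n-1)) (hst : NoTwoConsec S) :
    phi n S = rawPhi n S := by
  rw [phi, if_pos ⟨hsub, hst⟩, rawPhi]
  by_cases hm : n - 1 ∈ S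
  · rw [if_pos hm]
    have hsup : S.sup id = n - 1 := by
      refine le_antisymm (sup_le_of_subset_Icc hsub) ?_
      exact Finset.le_sup (f := id) hm
    rw [hsup, show n - (n - 1) = 1 by omega, qnum_one]
  · rw [if_neg hm]

/-- Lemma (Chow identity): for `n ≥ 2` and `T ∈ Stab([2, n-1])`,
`∑_{T ⊆ S ⊆ [1, n-1]} φ_{S,n}(t) = t^{|T|} (1+t)^{n-1-2|T|}`. -/
theorem phi_interval_sum (n : ℕ) (hn : 2 ≤ n) (T : Finset ℕ)
    (hT1 : T ⊆ Finset.Icc 2 (n - 1)) (hT2 : NoTwoConsec T) :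
    ∑ S ∈ (Finset.Icc 1 (n - 1)).powerset.filter (fun S => T ⊆ S), phi n S =
      X ^ T.card * (1 + X) ^ (n - 1 - 2 * T.card) := by
  have hmain := (mainFQ n).2 T hT1 hT2 (by omega)
  have hsub1 : stabSets (n-1) T ⊆ (Finset.Icc 1 (n - 1)).powerset.filter (fun S => T ⊆ S) := by
    intro S hS
    rw [stabSets, Finset.mem_filter, Finset.mem_powerset] at hS
    rw [Finset.mem_filter, Finset.mem_powerset]
    refine ⟨hS.1.trans (Finset.Icc_subset_Icc_left (by omega)), hS.2.1⟩
  have hzero : ∀ S ∈ (Finset.Icc 1 (n - 1)).powerset.filter (fun S => T ⊆ S),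
      S ∉ stabSets (n-1) T → phi n S = 0 := by
    intro S hS hnot
    rw [Finset.mem_filter, Finset.mem_powerset] at hS
    rw [stabSets, Finset.mem_filter, Finset.mem_powerset] at hnot
    rw [phi, if_neg]
    intro ⟨h1, h2⟩
    exact hnot ⟨h1, hS.2, h2⟩
  rw [← Finset.sum_subset hsub1 hzero]
  rw [← hmain, Fsum]
  refine Finset.sum_congr rfl fun S hS => ?_
  rw [stabSets, Finset.mem_filter, Finset.mem_powerset] at hS
  exact phi_eq_rawPhi hn hS.1 hS.2.2
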